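/- Let W be a complex vector space, c a complex number, (u_k)_{k∈ℤ} a family of linear operators on W, and (H_m)_{m≥1} a family of pairwise commuting linear operators on W such that H_m u_k − u_k H_m = c·u_{k−m} for all m ≥ 1 and k ∈ ℤ. For t ∈ {+1, −1} define the formal operator series E(t, z) = exp(−t·Σ_{m≥1} (H_m/m) z^{m}); each coefficient of a power of z in E(t,z) is a finite linear combination of finite products of the operators H_m, hence a well-defined operator on W, and E(t,z) has only nonnegative powers of z. Set Y(u, z1) = Σ_{k∈ℤ} u_k z1^{−k−1}. Then for every w ∈ W the following identity of formal series in z1 and z2 holds: E(+1, z2)·Y(u, z1)·E(−1, z2)·w = Σ_{i∈ℕ} binom(c, i)(−1)^i z2^{i} z1^{−i}·Y(u, z1)·w; that is, conjugation of the field Y(u, z1) by E(+1, z2) multiplies it by the expansion of (1 − z2/z1)^{c} in nonnegative integer powers of z2. -/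

import Mathlib

/-- The generalized binomial coefficient `binom(c, i) = c(c−1)⋯(c−i+1)/i!` for `c : ℂ`, `i : ℕ`. -/
noncomputable def cchoose (c : ℂ) (i : ℕ) : ℂ :=
  (∏ j ∈ Finset.range i, (c - (j : ℂ))) / (i.factorial : ℂ)

/-- The coefficient of `z^j` in the formal operator series
`E(t, z) = exp(−t·Σ_{m≥1} (H_m/m) z^m)`, computed via the power-series expansion of the
exponential: the coefficient of `z^j` in `Σ_{r≥0} X^r / r!` where
`X = −t·Σ_{m≥1} (H_m/m) z^m`.  Since `X` has zero constant term, only `r ≤ j`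
contributes, so each coefficient is a finite sum of finite products of the `H_m`. -/
noncomputable def expCoeff {W : Type} [AddCommGroup W] [Module ℂ W]
    (H : ℕ → Module.End ℂ W) (t : ℂ) (j : ℕ) : Module.End ℂ W :=
  ∑ r ∈ Finset.range (j + 1),
    (r.factorial : ℂ)⁻¹ •
      (PowerSeries.coeff (R := Module.End ℂ W) j
        ((PowerSeries.mk fun m => if m = 0 then 0 else (-t / (m : ℂ)) • H m) ^ r))

open Finset PowerSeries

namespace ConjAux

set_option maxHeartbeats 1000000

set_option linter.unusedSectionVars false

set_option linter.unusedSectionVars false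

variable {R : Type*} [Ring R] [Algebra ℂ R]

/-- formal `z d/dz` on power series. -/
noncomputable def der (A : PowerSeries R) : PowerSeries R :=
  PowerSeries.mk fun j => (j : ℂ) • PowerSeries.coeff (R := R) j A

lemma coeff_csmul {n : ℕ} {a : ℂ} {φ : PowerSeries R} :
    PowerSeries.coeff (R := R) n (a • φ) = a • PowerSeries.coeff (R := R) n φ := rfl

@[simp] lemma coeff_der (A : PowerSeries R) (j : ℕ) :
    PowerSeries.coeff (R := R) j (der A) = (j : ℂ) • PowerSeries.coeff (R := R) j A :=
  PowerSeries.coeff_mk _ _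

lemma der_C (a : R) : der (PowerSeries.C (R := R) a) = 0 := by
  ext j
  simp only [coeff_der, PowerSeries.coeff_C, map_zero]
  rcases Nat.eq_zero_or_pos j with h | h
  · simp [h]
  · simp [Nat.pos_iff_ne_zero.mp h]

lemma der_one : der (1 : PowerSeries R) = 0 := by
  simpa using der_C (1 : R)

lemma der_mul (A B : PowerSeries R) : der (A * B) = der A * B + A * der B := by
  ext j
  simp only [coeff_der, map_add, PowerSeries.coeff_mul, coeff_der, smul_sum]
  rw [← Finset.sum_add_distrib]
  refine Finset.sum_congr rfl fun p hp => ?_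
  rw [Finset.HasAntidiagonal.mem_antidiagonal] at hp
  rw [← hp]
  push_cast
  rw [add_smul, smul_mul_assoc, mul_smul_comm]

lemma mul_comm_of_coeff_comm (A B : PowerSeries R)
    (h : ∀ a b, PowerSeries.coeff (R := R) a A * PowerSeries.coeff (R := R) b B
      = PowerSeries.coeff (R := R) b B * PowerSeries.coeff (R := R) a A) : A * B = B * A := by
  ext j
  rw [PowerSeries.coeff_mul, PowerSeries.coeff_mul, ← Finset.Nat.sum_antidiagonal_swap]
  refine Finset.sum_congr rfl fun p _ => ?_
  simp only [Prod.fst_swap, Prod.snd_swap]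
  exact h p.2 p.1

lemma coeff_pow_comm (x : R) (A : PowerSeries R)
    (h : ∀ a, x * PowerSeries.coeff (R := R) a A = PowerSeries.coeff (R := R) a A * x) :
    ∀ (r : ℕ) (j : ℕ), x * PowerSeries.coeff (R := R) j (A ^ r) = PowerSeries.coeff (R := R) j (A ^ r) * x := by
  intro r
  induction r with
  | zero =>
    intro j
    simp only [pow_zero, PowerSeries.coeff_one]
    split <;> simp
  | succ r ih =>
    intro j
    rw [pow_succ, PowerSeries.coeff_mul, Finset.mul_sum, Finset.sum_mul]
    refine Finset.sum_congr rfl fun p _ => ?_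
    rw [← mul_assoc, ih p.1, mul_assoc, h p.2, mul_assoc]

lemma coeff_pow_eq_zero_of_lt {A : PowerSeries R} (h0 : PowerSeries.coeff (R := R) 0 A = 0) :
    ∀ (s b : ℕ), b < s → PowerSeries.coeff (R := R) b (A ^ s) = 0 := by
  intro s
  induction s with
  | zero => intro b hb; omega
  | succ s ih =>
    intro b hb
    rw [pow_succ, PowerSeries.coeff_mul]
    refine Finset.sum_eq_zero fun p hp => ?_
    rw [Finset.HasAntidiagonal.mem_antidiagonal] at hp
    rcases Nat.eq_zero_or_pos p.2 with h2 | h2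
    · have : p.2 = 0 := h2
      rw [this, h0, mul_zero]
    · have : p.1 < s := by omega
      rw [ih p.1 this, zero_mul]

lemma der_pow (A : PowerSeries R) (h : A * der A = der A * A) :
    ∀ r : ℕ, der (A ^ (r + 1)) = ((r : ℂ) + 1) • (der A * A ^ r) := by
  intro r
  induction r with
  | zero => simp
  | succ r ih =>
    have hcomm : ∀ (B : PowerSeries R), A * (der A * B) = der A * (A * B) := by
      intro B; rw [← mul_assoc, h, mul_assoc]
    push_cast
    calc der (A ^ (r + 2)) = der (A * A ^ (r + 1)) := by rw [← pow_succ']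
      _ = der A * A ^ (r + 1) + A * der (A ^ (r + 1)) := der_mul _ _
      _ = der A * A ^ (r + 1) + ((r : ℂ) + 1) • (A * (der A * A ^ r)) := by
          rw [ih, mul_smul_comm]
      _ = der A * A ^ (r + 1) + ((r : ℂ) + 1) • (der A * A ^ (r + 1)) := by
          rw [hcomm, ← pow_succ']
      _ = ((r : ℂ) + 1 + 1) • (der A * A ^ (r + 1)) := by
          conv_rhs => rw [add_smul]
          rw [one_smul, add_comm]

/-- regrouping a triple antidiagonal sum by the middle index. -/
lemma tri {M : Type*} [AddCommMonoid M] (n : ℕ) (g : ℕ → ℕ → ℕ → M) :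
    (∑ p ∈ Finset.HasAntidiagonal.antidiagonal n, ∑ q ∈ Finset.HasAntidiagonal.antidiagonal p.2, g p.1 q.1 q.2)
      = ∑ p ∈ Finset.HasAntidiagonal.antidiagonal n, ∑ q ∈ Finset.HasAntidiagonal.antidiagonal p.2, g q.1 p.1 q.2 := by
  rw [Finset.sum_sigma', Finset.sum_sigma']
  refine Finset.sum_nbij' (fun x => ⟨(x.2.1, x.1.1 + x.2.2), (x.1.1, x.2.2)⟩)
    (fun x => ⟨(x.2.1, x.1.1 + x.2.2), (x.1.1, x.2.2)⟩) ?_ ?_ ?_ ?_ ?_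
  · rintro ⟨⟨a, r⟩, ⟨m, b⟩⟩ hx
    simp only [Finset.mem_sigma, Finset.HasAntidiagonal.mem_antidiagonal] at hx ⊢
    obtain ⟨h1, h2⟩ := hx
    exact ⟨by omega, trivial⟩
  · rintro ⟨⟨m, s⟩, ⟨a, b⟩⟩ hx
    simp only [Finset.mem_sigma, Finset.HasAntidiagonal.mem_antidiagonal] at hx ⊢
    obtain ⟨h1, h2⟩ := hx
    exact ⟨by omega, trivial⟩
  · rintro ⟨⟨a, r⟩, ⟨m, b⟩⟩ hx
    simp only [Finset.mem_sigma, Finset.HasAntidiagonal.mem_antidiagonal] at hx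
    obtain ⟨h1, h2⟩ := hx
    subst h2
    rfl
  · rintro ⟨⟨m, s⟩, ⟨a, b⟩⟩ hx
    simp only [Finset.mem_sigma, Finset.HasAntidiagonal.mem_antidiagonal] at hx
    obtain ⟨h1, h2⟩ := hx
    subst h2
    rfl
  · rintro ⟨⟨a, r⟩, ⟨m, b⟩⟩ hx
    rfl



-- ===== scalar lemmas =====

lemma cchoose_zero (c : ℂ) : cchoose c 0 = 1 := by simp [cchoose]

lemma cchoose_succ (c : ℂ) (j : ℕ) :
    ((j : ℂ) + 1) * cchoose c (j + 1) = (c - j) * cchoose c j := by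
  have h1 : ((j.factorial : ℂ)) ≠ 0 := Nat.cast_ne_zero.mpr j.factorial_ne_zero
  have h2 : (((j + 1).factorial : ℂ)) ≠ 0 := Nat.cast_ne_zero.mpr (j + 1).factorial_ne_zero
  have h3 : ((j : ℂ) + 1) ≠ 0 := Nat.cast_add_one_ne_zero j
  rw [cchoose, cchoose, Finset.prod_range_succ, Nat.factorial_succ]
  push_cast
  field_simp

lemma cchoose_one (c : ℂ) : cchoose c 1 = c := by
  simp [cchoose]

lemma scal (c : ℂ) (j : ℕ) :
    -c * ∑ s ∈ Finset.range (j + 1), (-1 : ℂ) ^ s * cchoose c s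
      = ((j : ℂ) + 1) * ((-1 : ℂ) ^ (j + 1) * cchoose c (j + 1)) := by
  induction j with
  | zero =>
    simp [cchoose_one, cchoose_zero]
  | succ j ih =>
    rw [Finset.sum_range_succ, mul_add, ih]
    have h := cchoose_succ c (j + 1)
    push_cast at h ⊢
    linear_combination (-((-1 : ℂ) ^ (j + 2))) * h

lemma fact_inv_succ_smul {M : Type*} [AddCommMonoid M] [Module ℂ M] (r : ℕ) (x : M) :
    (((r + 1).factorial : ℂ))⁻¹ • (((r : ℂ) + 1) • x) = ((r.factorial : ℂ))⁻¹ • x := by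
  rw [smul_smul]
  congr 1
  have h1 : ((r.factorial : ℂ)) ≠ 0 := Nat.cast_ne_zero.mpr r.factorial_ne_zero
  have h3 : ((r : ℂ) + 1) ≠ 0 := Nat.cast_add_one_ne_zero r
  rw [Nat.factorial_succ]
  push_cast
  field_simp

section Main

variable {W : Type} [AddCommGroup W] [Module ℂ W]

/-- the series `−t Σ_{m ≥ 1} (H_m/m) z^m` appearing in `expCoeff`. -/
noncomputable def Nser (H : ℕ → Module.End ℂ W) (t : ℂ) : PowerSeries (Module.End ℂ W) :=
  PowerSeries.mk fun m => if m = 0 then 0 else (-t / (m : ℂ)) • H m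

/-- the series `Σ_{m ≥ 1} H_m z^m`. -/
noncomputable def Dser (H : ℕ → Module.End ℂ W) : PowerSeries (Module.End ℂ W) :=
  PowerSeries.mk fun m => if m = 0 then 0 else H m

/-- the series `E(t,z)`. -/
noncomputable def Eser (H : ℕ → Module.End ℂ W) (t : ℂ) : PowerSeries (Module.End ℂ W) :=
  PowerSeries.mk fun j => expCoeff H t j

/-- the series `Σ_{m ≥ 1} u_{k−m} z^m`. -/
noncomputable def Sser (u : ℤ → Module.End ℂ W) (k : ℤ) : PowerSeries (Module.End ℂ W) :=
  PowerSeries.mk fun m => if m = 0 then 0 else u (k - m)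

variable (H : ℕ → Module.End ℂ W) (t : ℂ)

lemma expCoeff_eq (j : ℕ) :
    expCoeff H t j = ∑ r ∈ Finset.range (j + 1),
      (r.factorial : ℂ)⁻¹ • PowerSeries.coeff (R := Module.End ℂ W) j ((Nser H t) ^ r) := rfl

lemma coeff_Nser_zero : PowerSeries.coeff (R := Module.End ℂ W) 0 (Nser H t) = 0 := by
  simp [Nser]

lemma expCoeff_zero : expCoeff H t 0 = 1 := by
  simp [expCoeff]

lemma derN : der (Nser H t) = (-t) • Dser H := by
  ext m : 1
  rw [coeff_der, PowerSeries.coeff_smul]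
  simp only [Nser, Dser, PowerSeries.coeff_mk]
  rcases Nat.eq_zero_or_pos m with h | h
  · simp [h]
  · have hm : m ≠ 0 := Nat.pos_iff_ne_zero.mp h
    have hmc : (m : ℂ) ≠ 0 := Nat.cast_ne_zero.mpr hm
    rw [if_neg hm, if_neg hm, smul_smul]
    congr 1
    field_simp

variable (hcomm : ∀ m n : ℕ, 1 ≤ m → 1 ≤ n → H m * H n = H n * H m)

include hcomm

lemma H_comm_coeff_Nser (b : ℕ) (hb : 1 ≤ b) (a : ℕ) (t' : ℂ) :
    H b * PowerSeries.coeff (R := Module.End ℂ W) a (Nser H t')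
      = PowerSeries.coeff (R := Module.End ℂ W) a (Nser H t') * H b := by
  simp only [Nser, PowerSeries.coeff_mk]
  rcases Nat.eq_zero_or_pos a with h | h
  · simp [h]
  · have ha : a ≠ 0 := Nat.pos_iff_ne_zero.mp h
    rw [if_neg ha, mul_smul_comm, smul_mul_assoc, hcomm b a hb h]

lemma H_comm_expCoeff (b : ℕ) (hb : 1 ≤ b) (j : ℕ) :
    H b * expCoeff H t j = expCoeff H t j * H b := by
  rw [expCoeff_eq, Finset.mul_sum, Finset.sum_mul]
  refine Finset.sum_congr rfl fun r _ => ?_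
  rw [mul_smul_comm, smul_mul_assoc,
    coeff_pow_comm (H b) (Nser H t) (fun a => H_comm_coeff_Nser H hcomm b hb a t) r j]

lemma ND_comm : Nser H t * Dser H = Dser H * Nser H t := by
  refine mul_comm_of_coeff_comm _ _ fun a b => ?_
  simp only [Nser, Dser, PowerSeries.coeff_mk]
  rcases Nat.eq_zero_or_pos a with ha | ha
  · simp [ha]
  rcases Nat.eq_zero_or_pos b with hb | hb
  · simp [hb]
  rw [if_neg (Nat.pos_iff_ne_zero.mp ha), if_neg (Nat.pos_iff_ne_zero.mp hb),
    smul_mul_assoc, mul_smul_comm, hcomm a b ha hb]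

lemma ED_comm : Eser H t * Dser H = Dser H * Eser H t := by
  refine mul_comm_of_coeff_comm _ _ fun a b => ?_
  simp only [Eser, Dser, PowerSeries.coeff_mk]
  rcases Nat.eq_zero_or_pos b with hb | hb
  · simp [hb]
  rw [if_neg (Nat.pos_iff_ne_zero.mp hb), H_comm_expCoeff H t hcomm b hb a]

lemma N_derN_comm : Nser H t * der (Nser H t) = der (Nser H t) * Nser H t := by
  rw [derN, mul_smul_comm, smul_mul_assoc, ND_comm H t hcomm]

lemma der_Eser : der (Eser H t) = ((-t) • Dser H) * Eser H t := by
  ext j : 1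
  have hDT0 : PowerSeries.coeff (R := Module.End ℂ W) 0 ((-t) • Dser H) = 0 := by
    simp [Dser, PowerSeries.coeff_smul]
  rw [coeff_der]
  have key : (j : ℂ) • PowerSeries.coeff (R := Module.End ℂ W) j (Eser H t)
      = ∑ r ∈ Finset.range j,
          ((r.factorial : ℂ))⁻¹ •
            PowerSeries.coeff (R := Module.End ℂ W) j (((-t) • Dser H) * (Nser H t) ^ r) := by
    rw [show PowerSeries.coeff (R := Module.End ℂ W) j (Eser H t) = expCoeff H t j from
      PowerSeries.coeff_mk _ _, expCoeff_eq, Finset.smul_sum]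
    have step1 : ∀ r : ℕ, (j : ℂ) • ((r.factorial : ℂ))⁻¹ •
        PowerSeries.coeff (R := Module.End ℂ W) j ((Nser H t) ^ r)
        = ((r.factorial : ℂ))⁻¹ • PowerSeries.coeff (R := Module.End ℂ W) j (der ((Nser H t) ^ r)) := by
      intro r
      rw [coeff_der, smul_comm]
    simp only [step1]
    rw [Finset.sum_range_succ']
    have step2 : ((Nat.factorial 0 : ℂ))⁻¹ •
        PowerSeries.coeff (R := Module.End ℂ W) j (der ((Nser H t) ^ 0)) = 0 := by
      rw [pow_zero, der_one]
      simp
    rw [step2, add_zero]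
    refine Finset.sum_congr rfl fun r _ => ?_
    rw [der_pow (Nser H t) (N_derN_comm H t hcomm) r]
    rw [coeff_csmul, derN]
    exact fact_inv_succ_smul r _
  rw [key]
  have swap : ∑ r ∈ Finset.range j, ((r.factorial : ℂ))⁻¹ •
      PowerSeries.coeff (R := Module.End ℂ W) j (((-t) • Dser H) * (Nser H t) ^ r)
      = ∑ p ∈ Finset.HasAntidiagonal.antidiagonal j, ∑ r ∈ Finset.range j,
          ((r.factorial : ℂ))⁻¹ • (PowerSeries.coeff (R := Module.End ℂ W) p.1 ((-t) • Dser H) *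
            PowerSeries.coeff (R := Module.End ℂ W) p.2 ((Nser H t) ^ r)) := by
    simp only [PowerSeries.coeff_mul, Finset.smul_sum]
    exact Finset.sum_comm
  rw [swap, PowerSeries.coeff_mul]
  refine Finset.sum_congr rfl fun p hp => ?_
  rw [Finset.HasAntidiagonal.mem_antidiagonal] at hp
  have hzero : ∀ r ∈ Finset.range (j + 1), p.2 < r →
      ((r.factorial : ℂ))⁻¹ • (PowerSeries.coeff (R := Module.End ℂ W) p.1 ((-t) • Dser H) *
        PowerSeries.coeff (R := Module.End ℂ W) p.2 ((Nser H t) ^ r)) = 0 := by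
    intro r _ hr
    rw [coeff_pow_eq_zero_of_lt (coeff_Nser_zero H t) r p.2 hr, mul_zero, smul_zero]
  have e1 : ∑ r ∈ Finset.range j, ((r.factorial : ℂ))⁻¹ •
      (PowerSeries.coeff (R := Module.End ℂ W) p.1 ((-t) • Dser H) *
        PowerSeries.coeff (R := Module.End ℂ W) p.2 ((Nser H t) ^ r))
      = ∑ r ∈ Finset.range (j + 1), ((r.factorial : ℂ))⁻¹ •
          (PowerSeries.coeff (R := Module.End ℂ W) p.1 ((-t) • Dser H) *
            PowerSeries.coeff (R := Module.End ℂ W) p.2 ((Nser H t) ^ r)) := by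
    refine Finset.sum_subset (Finset.range_subset_range.mpr (by omega)) ?_
    intro r hr hr'
    simp only [Finset.mem_range] at hr hr'
    rcases Nat.eq_zero_or_pos p.1 with h1 | h1
    · simp [Dser, h1, PowerSeries.coeff_smul]
    · exact hzero r (by simp only [Finset.mem_range]; omega) (by omega)
  have e2 : ∑ r ∈ Finset.range (p.2 + 1), ((r.factorial : ℂ))⁻¹ •
      (PowerSeries.coeff (R := Module.End ℂ W) p.1 ((-t) • Dser H) *
        PowerSeries.coeff (R := Module.End ℂ W) p.2 ((Nser H t) ^ r))
      = ∑ r ∈ Finset.range (j + 1), ((r.factorial : ℂ))⁻¹ •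
          (PowerSeries.coeff (R := Module.End ℂ W) p.1 ((-t) • Dser H) *
            PowerSeries.coeff (R := Module.End ℂ W) p.2 ((Nser H t) ^ r)) := by
    refine Finset.sum_subset (Finset.range_subset_range.mpr (by omega)) ?_
    intro r hr hr'
    simp only [Finset.mem_range] at hr hr'
    exact hzero r (by simp only [Finset.mem_range]; omega) (by omega)
  rw [e1, ← e2]
  rw [show PowerSeries.coeff (R := Module.End ℂ W) p.2 (Eser H t) = expCoeff H t p.2 from
    PowerSeries.coeff_mk _ _, expCoeff_eq, Finset.mul_sum]
  refine Finset.sum_congr rfl fun r _ => ?_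
  rw [mul_smul_comm]

lemma coeff_triple (u : ℤ → Module.End ℂ W) (k : ℤ) (n : ℕ) :
    PowerSeries.coeff (R := Module.End ℂ W) n
        (Eser H 1 * (PowerSeries.C (R := Module.End ℂ W) (u k) * Eser H (-1)))
      = ∑ pq ∈ Finset.HasAntidiagonal.antidiagonal n,
          expCoeff H 1 pq.1 * u k * expCoeff H (-1) pq.2 := by
  rw [PowerSeries.coeff_mul]
  refine Finset.sum_congr rfl fun p _ => ?_
  rw [PowerSeries.coeff_C_mul]
  simp only [Eser, PowerSeries.coeff_mk]
  rw [← mul_assoc]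

lemma CkD (c : ℂ) (u : ℤ → Module.End ℂ W)
    (hrel : ∀ m : ℕ, 1 ≤ m → ∀ k : ℤ, H m * u k - u k * H m = c • u (k - m)) (k : ℤ) :
    PowerSeries.C (R := Module.End ℂ W) (u k) * Dser H
      = Dser H * PowerSeries.C (R := Module.End ℂ W) (u k) - c • Sser u k := by
  ext m : 1
  rw [map_sub, PowerSeries.coeff_mul_C, PowerSeries.coeff_C_mul, coeff_csmul]
  simp only [Dser, Sser, PowerSeries.coeff_mk]
  rcases Nat.eq_zero_or_pos m with h | h
  · simp [h]
  · have hm : m ≠ 0 := Nat.pos_iff_ne_zero.mp h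
    simp only [if_neg hm]
    have hr := hrel m h k
    rw [← hr]
    abel

lemma derPhi (c : ℂ) (u : ℤ → Module.End ℂ W)
    (hrel : ∀ m : ℕ, 1 ≤ m → ∀ k : ℤ, H m * u k - u k * H m = c • u (k - m)) (k : ℤ) :
    der (Eser H 1 * (PowerSeries.C (R := Module.End ℂ W) (u k) * Eser H (-1)))
      = (-c) • (Eser H 1 * (Sser u k * Eser H (-1))) := by
  have d1 : der (Eser H 1) = ((-1 : ℂ) • Dser H) * Eser H 1 := der_Eser H 1 hcomm
  have d2 : der (Eser H (-1)) = Dser H * Eser H (-1) := by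
    have h := der_Eser H (-1) hcomm
    norm_num at h
    exact h
  rw [der_mul, der_mul, der_C, zero_mul, zero_add, d1, d2]
  have h1 : PowerSeries.C (R := Module.End ℂ W) (u k) * (Dser H * Eser H (-1))
      = Dser H * (PowerSeries.C (R := Module.End ℂ W) (u k) * Eser H (-1))
        - c • (Sser u k * Eser H (-1)) := by
    rw [← mul_assoc, CkD H hcomm c u hrel k, sub_mul, smul_mul_assoc, mul_assoc]
  rw [h1, mul_sub, ← mul_assoc (Eser H 1) (Dser H), ED_comm H 1 hcomm,
    mul_assoc (Dser H) (Eser H 1), mul_smul_comm, smul_mul_assoc, neg_one_smul, neg_smul]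
  rw [neg_mul, mul_assoc]
  abel

lemma main_op (c : ℂ) (u : ℤ → Module.End ℂ W)
    (hrel : ∀ m : ℕ, 1 ≤ m → ∀ k : ℤ, H m * u k - u k * H m = c • u (k - m)) :
    ∀ (j : ℕ) (k : ℤ),
      (∑ pq ∈ Finset.HasAntidiagonal.antidiagonal j, expCoeff H 1 pq.1 * u k * expCoeff H (-1) pq.2)
        = ((-1 : ℂ) ^ j * cchoose c j) • u (k - j) := by
  intro j
  induction j using Nat.strong_induction_on with
  | _ j ih =>
  intro k
  rcases j with _ | j
  · simp [expCoeff_zero, cchoose_zero]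
  · -- coefficient j+1 of the derivative identity
    have hder := congrArg (PowerSeries.coeff (R := Module.End ℂ W) (j + 1))
      (derPhi H hcomm c u hrel k)
    rw [coeff_der, coeff_triple H hcomm u k (j + 1), coeff_csmul] at hder
    -- expand the triple product coefficient
    have hS : PowerSeries.coeff (R := Module.End ℂ W) (j + 1)
        (Eser H 1 * (Sser u k * Eser H (-1)))
        = ∑ p ∈ Finset.HasAntidiagonal.antidiagonal (j + 1), ∑ q ∈ Finset.HasAntidiagonal.antidiagonal p.2,
            expCoeff H 1 q.1 *
              (PowerSeries.coeff (R := Module.End ℂ W) p.1 (Sser u k) * expCoeff H (-1) q.2) := by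
      rw [PowerSeries.coeff_mul]
      have expand : ∀ p : ℕ × ℕ,
          PowerSeries.coeff (R := Module.End ℂ W) p.1 (Eser H 1) *
            PowerSeries.coeff (R := Module.End ℂ W) p.2 (Sser u k * Eser H (-1))
          = ∑ q ∈ Finset.HasAntidiagonal.antidiagonal p.2,
              expCoeff H 1 p.1 *
                (PowerSeries.coeff (R := Module.End ℂ W) q.1 (Sser u k) * expCoeff H (-1) q.2) := by
        intro p
        rw [PowerSeries.coeff_mul, Finset.mul_sum]
        refine Finset.sum_congr rfl fun q _ => ?_
        simp only [Eser, PowerSeries.coeff_mk]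
      calc ∑ p ∈ Finset.HasAntidiagonal.antidiagonal (j + 1),
            PowerSeries.coeff (R := Module.End ℂ W) p.1 (Eser H 1) *
              PowerSeries.coeff (R := Module.End ℂ W) p.2 (Sser u k * Eser H (-1))
          = ∑ p ∈ Finset.HasAntidiagonal.antidiagonal (j + 1), ∑ q ∈ Finset.HasAntidiagonal.antidiagonal p.2,
              expCoeff H 1 p.1 *
                (PowerSeries.coeff (R := Module.End ℂ W) q.1 (Sser u k) * expCoeff H (-1) q.2) := by
            exact Finset.sum_congr rfl fun p _ => expand p
        _ = _ := tri (j + 1) fun a m b => expCoeff H 1 a *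
              (PowerSeries.coeff (R := Module.End ℂ W) m (Sser u k) * expCoeff H (-1) b)
    have hstep : ∀ p ∈ Finset.HasAntidiagonal.antidiagonal (j + 1),
        (∑ q ∈ Finset.HasAntidiagonal.antidiagonal p.2,
            expCoeff H 1 q.1 *
              (PowerSeries.coeff (R := Module.End ℂ W) p.1 (Sser u k) * expCoeff H (-1) q.2))
          = (if p.1 = 0 then (0 : ℂ) else (-1 : ℂ) ^ p.2 * cchoose c p.2) •
              u (k - ((j : ℤ) + 1)) := by
      intro p hp
      rw [Finset.HasAntidiagonal.mem_antidiagonal] at hp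
      rcases Nat.eq_zero_or_pos p.1 with h0 | h0
      · simp [Sser, h0]
      · have hm : p.1 ≠ 0 := Nat.pos_iff_ne_zero.mp h0
        simp only [Sser, PowerSeries.coeff_mk, if_neg hm]
        simp only [← mul_assoc]
        rw [ih p.2 (by omega) (k - p.1)]
        have harg : k - (p.1 : ℤ) - (p.2 : ℕ) = k - ((j : ℤ) + 1) := by
          push_cast
          omega
        rw [harg]
    rw [hS, Finset.sum_congr rfl hstep, ← Finset.sum_smul] at hder
    have hsum : (∑ p ∈ Finset.HasAntidiagonal.antidiagonal (j + 1),
        (if p.1 = 0 then (0 : ℂ) else (-1 : ℂ) ^ p.2 * cchoose c p.2))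
        = ∑ s ∈ Finset.range (j + 1), (-1 : ℂ) ^ s * cchoose c s := by
      rw [Finset.Nat.sum_antidiagonal_eq_sum_range_succ_mk, Finset.sum_range_succ']
      simp only [if_pos rfl, add_zero]
      have step : ∀ i ∈ Finset.range (j + 1),
          (if i + 1 = 0 then (0 : ℂ) else
            (-1 : ℂ) ^ (j + 1 - (i + 1)) * cchoose c (j + 1 - (i + 1)))
          = (-1 : ℂ) ^ (j - i) * cchoose c (j - i) := by
        intro i _
        rw [if_neg (Nat.succ_ne_zero i), Nat.succ_sub_succ]
      rw [Finset.sum_congr rfl step]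
      have := Finset.sum_range_reflect (fun s => (-1 : ℂ) ^ s * cchoose c s) (j + 1)
      simpa using this
    rw [hsum] at hder
    have hscal := scal c j
    have hfinal : ((j + 1 : ℕ) : ℂ) •
        (∑ pq ∈ Finset.HasAntidiagonal.antidiagonal (j + 1), expCoeff H 1 pq.1 * u k * expCoeff H (-1) pq.2)
        = ((j + 1 : ℕ) : ℂ) • (((-1 : ℂ) ^ (j + 1) * cchoose c (j + 1)) • u (k - ((j : ℤ) + 1))) := by
      rw [hder, smul_smul, smul_smul]
      congr 1
      push_cast
      linear_combination hscal
    have hne : ((j + 1 : ℕ) : ℂ) ≠ 0 := Nat.cast_ne_zero.mpr (Nat.succ_ne_zero j)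
    have hres := smul_right_injective (Module.End ℂ W) hne hfinal
    have hcast : (k - ((j : ℤ) + 1)) = k - ((j + 1 : ℕ) : ℤ) := by push_cast; ring
    rw [hcast] at hres
    exact hres

end Main

end ConjAux

/-- Let `W` be a complex vector space, `c ∈ ℂ`, `(u_k)_{k∈ℤ}` operators on
`W`, and `(H_m)_{m≥1}` pairwise commuting operators with `[H_m, u_k] = c·u_{k−m}`.
With `E(t,z) = exp(−t·Σ_{m≥1} (H_m/m) z^m)` and `Y(u,z1) = Σ_{k∈ℤ} u_k z1^{−k−1}`, for
every `w ∈ W` the identity of formal series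
`E(+1,z2)·Y(u,z1)·E(−1,z2)·w = Σ_{i∈ℕ} binom(c,i)(−1)^i z2^i z1^{−i}·Y(u,z1)·w`
holds; coefficientwise (at `z1^{−k−1} z2^{j}`):
`Σ_{j1+j2=j} E(+1)_{j1}(u_k(E(−1)_{j2} w)) = (−1)^j binom(c,j)·u_{k−j} w`. -/
theorem conjugation_formula
    (W : Type) [AddCommGroup W] [Module ℂ W] (c : ℂ)
    (u : ℤ → Module.End ℂ W) (H : ℕ → Module.End ℂ W)
    (hcomm : ∀ m n : ℕ, 1 ≤ m → 1 ≤ n → H m * H n = H n * H m)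
    (hrel : ∀ m : ℕ, 1 ≤ m → ∀ k : ℤ, H m * u k - u k * H m = c • u (k - m)) :
    ∀ (k : ℤ) (j : ℕ) (w : W),
      (∑ pq ∈ Finset.HasAntidiagonal.antidiagonal j,
          expCoeff H 1 pq.1 (u k (expCoeff H (-1) pq.2 w)))
        = ((-1 : ℂ) ^ j * cchoose c j) • u (k - j) w := by
  intro k j w
  have h := ConjAux.main_op H hcomm c u hrel j k
  have happ := congrArg (fun f : Module.End ℂ W => f w) h
  simp only [LinearMap.sum_apply, Module.End.mul_apply, LinearMap.smul_apply] at happ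
  exact happ
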